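/- Let G be a countable discrete group, let Σ = (σ_n : G → Sym(V_n)) be a sofic approximation to G, let A be a finite set, and let η be a probability measure on A. Let μ = η^G be the product (Bernoulli) measure on A^G and let μ_n = η^{V_n} be the product measure on A^{V_n}. Then the sequence (μ_n)_{n=1}^∞ locally weak* converges to μ over Σ. -/

import Mathlib

open MeasureTheory Filter

/-- Shannon entropy of a measure on a finite set, with the convention `0 * log 0 = 0`. -/
noncomputable def shannonEntropy {D : Type*} [Fintype D] [MeasurableSpace D]
    (η : Measure D) : ℝ :=
  -∑ d : D, (η {d}).toReal * Real.log (η {d}).toReal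

/-- Shannon entropy `H_μ(α)` of a finite-valued observable: the entropy of the
pushforward measure `α_* μ`. -/
noncomputable def obsEntropy {X D : Type*} [MeasurableSpace X] [Fintype D] [MeasurableSpace D]
    (μ : Measure X) (α : X → D) : ℝ :=
  shannonEntropy (Measure.map α μ)

/-- Conditional Shannon entropy `H_μ(α | β) = H_μ((α,β)) - H_μ(β)`. -/
noncomputable def condEntropyObs {X D E : Type*} [MeasurableSpace X]
    [Fintype D] [MeasurableSpace D] [Fintype E] [MeasurableSpace E]
    (μ : Measure X) (α : X → D) (β : X → E) : ℝ :=
  obsEntropy μ (fun x => (α x, β x)) - obsEntropy μ β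

/-- The Rokhlin distance `d^Rok_μ(α, β) = H_μ(α|β) + H_μ(β|α)`. -/
noncomputable def rokDist {X D E : Type*} [MeasurableSpace X]
    [Fintype D] [MeasurableSpace D] [Fintype E] [MeasurableSpace E]
    (μ : Measure X) (α : X → D) (β : X → E) : ℝ :=
  condEntropyObs μ α β + condEntropyObs μ β α

/-- `σ = (σ_n : G → Sym(V_n))` is a sofic approximation to `G`. -/
def IsSoficApprox {G : Type*} [Group G] {V : ℕ → Type*} [∀ n, Fintype (V n)]
    (σ : ∀ n, G → Equiv.Perm (V n)) : Prop :=
  Tendsto (fun n => Fintype.card (V n)) atTop atTop ∧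
    (∀ g h : G,
      Tendsto (fun n =>
          (Nat.card {v : V n // σ n g (σ n h v) = σ n (g * h) v} : ℝ) /
            (Fintype.card (V n) : ℝ)) atTop (nhds 1)) ∧
    (∀ g : G, g ≠ 1 →
      Tendsto (fun n =>
          (Nat.card {v : V n // σ n g v = v} : ℝ) / (Fintype.card (V n) : ℝ))
        atTop (nhds 0))

/-- Total variation distance between two measures on a finite set. -/
noncomputable def tvDist {D : Type*} [Fintype D] [MeasurableSpace D]
    (η₁ η₂ : Measure D) : ℝ :=
  (∑ d : D, |(η₁ {d}).toReal - (η₂ {d}).toReal|) / 2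

/-- The sequence of measures `μn n` on `V n → A` locally weak* converges over the sofic
approximation `σ` to the measure `μ` on `A^G`: for every finite `F ⊆ G` and `δ > 0`,
eventually at least `(1-δ)|V_n|` of the `v ∈ V_n` satisfy
`‖(Π^{σ_n}_{v,F})_* μ_n − μ_F‖_TV < δ`. -/
def LocalWeakStarConverges {G : Type*} [Group G] [DecidableEq G] {V : ℕ → Type*}
    [∀ n, Fintype (V n)] {A : Type*} [Fintype A] [MeasurableSpace A]
    (σ : ∀ n, G → Equiv.Perm (V n)) (μn : ∀ n, Measure (V n → A))
    (μ : Measure (G → A)) : Prop :=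
  ∀ (F : Finset G) (δ : ℝ), 0 < δ → ∀ᶠ n in atTop,
    ((1 - δ) * (Fintype.card (V n) : ℝ)) ≤
      (Nat.card {v : V n //
        tvDist (Measure.map (fun (x : V n → A) (g : ↥F) => x (σ n g.1 v)) (μn n))
          (Measure.map (fun (a : G → A) (g : ↥F) => a g.1) μ) < δ} : ℝ)


open Set in

lemma map_pi_comp_singleton {W : Type*} [Fintype W] {F : Type*} [Fintype F]
    {A : Type*} [Fintype A] [MeasurableSpace A] [DiscreteMeasurableSpace A]
    (η : Measure A) [IsProbabilityMeasure η] (f : F → W) (hf : Function.Injective f)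
    (b : F → A) :
    Measure.map (fun x : W → A => fun g : F => x (f g)) (Measure.pi fun _ : W => η) {b}
      = ∏ g : F, η {b g} := by
  classical
  have hmeas : Measurable (fun x : W → A => fun g : F => x (f g)) :=
    measurable_pi_lambda _ fun g => measurable_pi_apply (f g)
  have hsing : MeasurableSet ({b} : Set (F → A)) := MeasurableSet.singleton b
  rw [Measure.map_apply hmeas hsing]
  have hpre : (fun x : W → A => fun g : F => x (f g)) ⁻¹' {b}
      = Set.pi Set.univ (fun w => {a | ∀ g, f g = w → b g = a}) := by
    ext x
    simp only [mem_preimage, mem_singleton_iff, funext_iff, Set.mem_pi, mem_univ,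
      forall_true_left, mem_setOf_eq]
    constructor
    · rintro h w g rfl; exact (h g).symm
    · intro h g; exact (h (f g) g rfl).symm
  rw [hpre, Measure.pi_pi]
  calc ∏ w : W, η {a | ∀ g, f g = w → b g = a}
      = ∏ w ∈ Finset.univ.image f, η {a | ∀ g, f g = w → b g = a} := by
        refine (Finset.prod_subset (Finset.subset_univ _) ?_).symm
        intro w _ hw
        have : {a | ∀ g, f g = w → b g = a} = Set.univ := by
          ext a; simp only [mem_setOf_eq, mem_univ, iff_true]
          intro g hg
          exact absurd (Finset.mem_image.mpr ⟨g, Finset.mem_univ g, hg⟩) hw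
        rw [this]; exact measure_univ
    _ = ∏ g : F, η {a | ∀ g', f g' = f g → b g' = a} := Finset.prod_image (fun x _ y _ h => hf h)
    _ = ∏ g : F, η {b g} := by
        refine Finset.prod_congr rfl fun g _ => ?_
        congr 1
        ext a
        simp only [mem_setOf_eq, mem_singleton_iff]
        constructor
        · intro ha; exact (ha g rfl).symm
        · rintro rfl g' hg'; rw [hf hg']

lemma badpair_tendsto {G : Type*} [Group G] {V : ℕ → Type*} [∀ n, Fintype (V n)]
    {σ : ∀ n, G → Equiv.Perm (V n)} (hσ : IsSoficApprox σ) {g h : G} (hgh : g ≠ h) :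
    Tendsto (fun n => (Nat.card {v : V n // σ n g v = σ n h v} : ℝ) /
      (Fintype.card (V n) : ℝ)) atTop (nhds 0) := by
  classical
  obtain ⟨-, hmul, hfix⟩ := hσ
  have hk : h⁻¹ * g ≠ 1 := fun hh => hgh (inv_mul_eq_one.mp hh).symm
  set N : ℕ → ℝ := fun n => (Fintype.card (V n) : ℝ) with hN
  set c₁ : ℕ → ℝ := fun n =>
    (Nat.card {v : V n // σ n h⁻¹ (σ n g v) = σ n (h⁻¹ * g) v} : ℝ) with hc₁
  set c₂ : ℕ → ℝ := fun n =>
    (Nat.card {v : V n // σ n h⁻¹ (σ n h v) = σ n (h⁻¹ * h) v} : ℝ) with hc₂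
  set c₃ : ℕ → ℝ := fun n =>
    (Nat.card {v : V n // σ n 1 (σ n 1 v) = σ n (1 * 1) v} : ℝ) with hc₃
  set fx : ℕ → ℝ := fun n => (Nat.card {v : V n // σ n (h⁻¹ * g) v = v} : ℝ) with hfx
  have hcount : ∀ n, (Nat.card {v : V n // σ n g v = σ n h v} : ℝ) ≤
      (N n - c₁ n) + (N n - c₂ n) + (N n - c₃ n) + fx n := by
    intro n
    simp only [hN, hc₁, hc₂, hc₃, hfx, Nat.card_eq_fintype_card, Fintype.card_subtype]
    set B := Finset.univ.filter (fun v : V n => σ n g v = σ n h v)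
    set C₁ := Finset.univ.filter (fun v : V n => σ n h⁻¹ (σ n g v) = σ n (h⁻¹ * g) v)
    set C₂ := Finset.univ.filter (fun v : V n => σ n h⁻¹ (σ n h v) = σ n (h⁻¹ * h) v)
    set C₃ := Finset.univ.filter (fun v : V n => σ n 1 (σ n 1 v) = σ n (1 * 1) v)
    set Fx := Finset.univ.filter (fun v : V n => σ n (h⁻¹ * g) v = v)
    have hsub : B ⊆ C₁ᶜ ∪ C₂ᶜ ∪ C₃ᶜ ∪ Fx := by
      intro v hv
      have hB : σ n g v = σ n h v := (Finset.mem_filter.mp hv).2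
      by_cases h1 : v ∈ C₁
      · by_cases h2 : v ∈ C₂
        · by_cases h3 : v ∈ C₃
          · have e1 : σ n h⁻¹ (σ n g v) = σ n (h⁻¹ * g) v := (Finset.mem_filter.mp h1).2
            have e2 : σ n h⁻¹ (σ n h v) = σ n (h⁻¹ * h) v := (Finset.mem_filter.mp h2).2
            have e3 : σ n 1 (σ n 1 v) = σ n (1 * 1) v := (Finset.mem_filter.mp h3).2
            have hone : σ n 1 v = v := by
              have := e3
              rw [one_mul] at this
              exact (σ n 1).injective this
            have : σ n (h⁻¹ * g) v = v := by
              rw [← e1, hB, e2, inv_mul_cancel, hone]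
            simp only [Finset.mem_union]
            exact Or.inr (Finset.mem_filter.mpr ⟨Finset.mem_univ v, this⟩)
          · simp only [Finset.mem_union]
            exact Or.inl (Or.inr (Finset.mem_compl.mpr h3))
        · simp only [Finset.mem_union]
          exact Or.inl (Or.inl (Or.inr (Finset.mem_compl.mpr h2)))
      · simp only [Finset.mem_union]
        exact Or.inl (Or.inl (Or.inl (Finset.mem_compl.mpr h1)))
    have hcard : B.card ≤ C₁ᶜ.card + C₂ᶜ.card + C₃ᶜ.card + Fx.card :=
      (Finset.card_le_card hsub).trans <|
        (Finset.card_union_le _ _).trans <|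
          Nat.add_le_add_right ((Finset.card_union_le _ _).trans
            (Nat.add_le_add_right (Finset.card_union_le _ _) _)) _
    have hcompl : ∀ s : Finset (V n), ((sᶜ).card : ℝ) = (Fintype.card (V n) : ℝ) - s.card := by
      intro s
      rw [Finset.card_compl, Nat.cast_sub (Finset.card_le_univ s)]
    calc (B.card : ℝ) ≤ ((C₁ᶜ.card + C₂ᶜ.card + C₃ᶜ.card + Fx.card : ℕ) : ℝ) := by
          exact_mod_cast hcard
      _ = ((Fintype.card (V n) : ℝ) - C₁.card) + ((Fintype.card (V n) : ℝ) - C₂.card)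
          + ((Fintype.card (V n) : ℝ) - C₃.card) + Fx.card := by
          push_cast
          rw [hcompl, hcompl, hcompl]
  have hbound : Tendsto (fun n => (1 - c₁ n / N n) + (1 - c₂ n / N n) + (1 - c₃ n / N n)
      + fx n / N n) atTop (nhds 0) := by
    have t1 := hmul h⁻¹ g
    have t2 := hmul h⁻¹ h
    have t3 := hmul 1 1
    have t4 := hfix _ hk
    have hone : Tendsto (fun _ : ℕ => (1:ℝ)) atTop (nhds 1) := tendsto_const_nhds
    have htt := (((hone.sub t1).add (hone.sub t2)).add (hone.sub t3)).add t4
    have h00 : (1:ℝ) - 1 + (1 - 1) + (1 - 1) + 0 = 0 := by norm_num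
    rw [h00] at htt
    exact htt
  refine squeeze_zero (fun n => by positivity) (fun n => ?_) hbound
  rcases eq_or_lt_of_le (Nat.cast_nonneg (Fintype.card (V n)) : (0:ℝ) ≤ N n) with h0 | h0
  · have hV : Fintype.card (V n) = 0 := by exact_mod_cast h0.symm
    have hE : IsEmpty (V n) := Fintype.card_eq_zero_iff.mp hV
    simp only [hN, hc₁, hc₂, hc₃, hfx, Nat.card_eq_fintype_card, Fintype.card_eq_zero, hV]
    norm_num
  · have hNe : N n ≠ 0 := ne_of_gt h0
    calc (Nat.card {v : V n // σ n g v = σ n h v} : ℝ) / N n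
        ≤ ((N n - c₁ n) + (N n - c₂ n) + (N n - c₃ n) + fx n) / N n := by
          gcongr
          exact hcount n
      _ = (1 - c₁ n / N n) + (1 - c₂ n / N n) + (1 - c₃ n / N n) + fx n / N n := by
          field_simp


theorem stmt12 {G : Type*} [Group G] [Countable G] [DecidableEq G]
    (V : ℕ → Type*) [∀ n, Fintype (V n)]
    (σ : ∀ n, G → Equiv.Perm (V n)) (hσ : IsSoficApprox σ)
    (A : Type*) [Fintype A] [MeasurableSpace A] [DiscreteMeasurableSpace A]
    (η : Measure A) [IsProbabilityMeasure η]
    -- `μ` is the Bernoulli (product) measure `η^G` on `A^G`, characterized by its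
    -- finite-dimensional marginals:
    (μ : Measure (G → A)) [IsProbabilityMeasure μ]
    (hμ : ∀ F : Finset G,
      Measure.map (fun (a : G → A) (g : ↥F) => a g.1) μ = Measure.pi fun _ : ↥F => η) :
    LocalWeakStarConverges σ (fun n => Measure.pi fun _ : V n => η) μ := by
  intro F δ hδ
  classical
  beta_reduce
  set P : Finset (G × G) := (F ×ˢ F).filter (fun p => p.1 ≠ p.2) with hP
  have htot : Tendsto (fun n => ∑ p ∈ P,
      (Nat.card {v : V n // σ n p.1 v = σ n p.2 v} : ℝ) / (Fintype.card (V n) : ℝ))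
      atTop (nhds 0) := by
    have := tendsto_finset_sum P
      (fun p hp => badpair_tendsto hσ (Finset.mem_filter.mp hp).2)
    simpa using this
  have hev1 := htot.eventually (eventually_lt_nhds hδ)
  have hev2 := hσ.1.eventually_ge_atTop 1
  filter_upwards [hev1, hev2] with n hsum hc1
  have Npos : (0:ℝ) < (Fintype.card (V n) : ℝ) := by exact_mod_cast hc1
  set Nr : ℝ := (Fintype.card (V n) : ℝ) with hNr
  set pred : V n → Prop := fun v =>
    tvDist (Measure.map (fun (x : V n → A) (g : ↥F) => x (σ n g.1 v))
        (Measure.pi fun _ : V n => η))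
      (Measure.map (fun (a : G → A) (g : ↥F) => a g.1) μ) < δ with hpred
  set Good : Finset (V n) :=
    Finset.univ.filter (fun v => ∀ g ∈ F, ∀ h ∈ F, g ≠ h → σ n g v ≠ σ n h v) with hGood
  set T : Finset (V n) := Finset.univ.filter pred with hT
  -- Good ⊆ T
  have hGT : Good ⊆ T := by
    intro v hv
    have hv' := (Finset.mem_filter.mp hv).2
    refine Finset.mem_filter.mpr ⟨Finset.mem_univ _, ?_⟩
    have hinj : Function.Injective (fun g : ↥F => σ n g.1 v) := by
      intro g₁ g₂ hgg
      by_contra hne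
      exact hv' g₁.1 g₁.2 g₂.1 g₂.2 (fun hc => hne (Subtype.ext hc)) hgg
    have key : ∀ b : ↥F → A,
        Measure.map (fun (x : V n → A) (g : ↥F) => x (σ n g.1 v))
          (Measure.pi fun _ : V n => η) {b}
        = Measure.map (fun (a : G → A) (g : ↥F) => a g.1) μ {b} := by
      intro b
      rw [hμ F, map_pi_comp_singleton η _ hinj b, ← Set.univ_pi_singleton b,
        Measure.pi_pi]
    show pred v
    rw [hpred]
    simpa [tvDist, key] using hδ
  -- counting
  have hGc : Goodᶜ ⊆ P.biUnion
      (fun p => Finset.univ.filter (fun v => σ n p.1 v = σ n p.2 v)) := by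
    intro v hv
    have hv' : ¬ (∀ g ∈ F, ∀ h ∈ F, g ≠ h → σ n g v ≠ σ n h v) := by
      intro hcon
      exact (Finset.mem_compl.mp hv)
        (Finset.mem_filter.mpr ⟨Finset.mem_univ _, hcon⟩)
    push_neg at hv'
    obtain ⟨g, hg, h, hh, hgh, he⟩ := hv'
    refine Finset.mem_biUnion.mpr ⟨(g, h), ?_, ?_⟩
    · exact Finset.mem_filter.mpr ⟨Finset.mem_product.mpr ⟨hg, hh⟩, hgh⟩
    · exact Finset.mem_filter.mpr ⟨Finset.mem_univ _, he⟩
  have h1 : (Goodᶜ).card ≤ ∑ p ∈ P,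
      (Finset.univ.filter (fun v : V n => σ n p.1 v = σ n p.2 v)).card :=
    (Finset.card_le_card hGc).trans (Finset.card_biUnion_le)
  have hcompl : ((Goodᶜ).card : ℝ) = Nr - Good.card := by
    rw [Finset.card_compl, Nat.cast_sub (Finset.card_le_univ Good)]
  have hsubcard : ∀ p : G × G, ((Finset.univ.filter
      (fun v : V n => σ n p.1 v = σ n p.2 v)).card : ℝ)
      = (Nat.card {v : V n // σ n p.1 v = σ n p.2 v} : ℝ) := by
    intro p
    rw [Nat.card_eq_fintype_card, Fintype.card_subtype]
  have h2 : Nr - Good.card ≤ ∑ p ∈ P,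
      (Nat.card {v : V n // σ n p.1 v = σ n p.2 v} : ℝ) := by
    rw [← hcompl]
    calc ((Goodᶜ).card : ℝ) ≤ (∑ p ∈ P, (Finset.univ.filter
          (fun v : V n => σ n p.1 v = σ n p.2 v)).card : ℕ) := by exact_mod_cast h1
      _ = ∑ p ∈ P, (Nat.card {v : V n // σ n p.1 v = σ n p.2 v} : ℝ) := by
          push_cast
          exact Finset.sum_congr rfl fun p _ => hsubcard p
  have h3 : ∑ p ∈ P, (Nat.card {v : V n // σ n p.1 v = σ n p.2 v} : ℝ)
      = (∑ p ∈ P, (Nat.card {v : V n // σ n p.1 v = σ n p.2 v} : ℝ) / Nr) * Nr := by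
    rw [← Finset.sum_div, div_mul_cancel₀ _ (ne_of_gt Npos)]
  have hGoodcard : (1 - δ) * Nr ≤ (Good.card : ℝ) := by
    have hs : (∑ p ∈ P, (Nat.card {v : V n // σ n p.1 v = σ n p.2 v} : ℝ) / Nr) < δ := hsum
    nlinarith [h2, h3, Npos]
  have hfinal : (Good.card : ℝ) ≤ (Nat.card {v : V n // pred v} : ℝ) := by
    rw [Nat.card_eq_fintype_card, Fintype.card_subtype]
    exact_mod_cast Finset.card_le_card hGT
  exact hGoodcard.trans hfinal
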